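/- Let G be a finitely generated abelian group. Then every generalized polynomial f : G → ℂ is a polynomial. -/

import Mathlib

/-- The forward difference operator: `(Δ_h f)(x) = f(x + h) - f(x)`. -/
def fdiff {G M : Type*} [Add G] [Sub M] (h : G) (f : G → M) : G → M :=
  fun x => f (x + h) - f x

/-- The composition `Δ_{y_1} Δ_{y_2} ⋯ Δ_{y_n}` of difference operators. -/
def multiDiff {G M : Type*} [Add G] [Sub M] : (n : ℕ) → (Fin n → G) → (G → M) → (G → M)
  | 0, _, f => f
  | n + 1, y, f => fdiff (y 0) (multiDiff n (fun i => y i.succ) f)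

/-- `f : G → ℂ` is a generalized polynomial of degree at most `n` if
`Δ_{y_1} ⋯ Δ_{y_{n+1}} f = 0` for all `y_1, …, y_{n+1}`. -/
def IsGenPolynomial {G : Type*} [Add G] (f : G → ℂ) : Prop :=
  ∃ n : ℕ, ∀ y : Fin (n + 1) → G, ∀ x : G, multiDiff (n + 1) y f x = 0

/-- `p : G → ℂ` is a polynomial: there are additive functions `a_1, …, a_n : G → ℂ`
and a complex polynomial `P` in `n` variables with `p x = P (a_1 x, …, a_n x)`. -/
def IsPolynomialC {H : Type*} [Add H] (p : H → ℂ) : Prop :=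
  ∃ (n : ℕ) (a : Fin n → H → ℂ) (P : MvPolynomial (Fin n) ℂ),
    (∀ i x y, a i (x + y) = a i x + a i y) ∧
    ∀ x, p x = MvPolynomial.eval (fun i => a i x) P

namespace GenPolyAux

open Finset

lemma multiDiff_succ {G M : Type*} [Add G] [Sub M] (n : ℕ) (y : Fin (n+1) → G)
    (f : G → M) :
    multiDiff (n+1) y f = fdiff (y 0) (multiDiff n (fun i => y i.succ) f) := rfl

/-- `multiDiff` of a translated composition with an additive map. -/
lemma multiDiff_comp {G H : Type*} [AddCommGroup G] [AddCommGroup H]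
    (φ : G → H) (hφ : ∀ a b, φ (a + b) = φ a + φ b) (f : H → ℂ) (c : H) :
    ∀ (m : ℕ) (y : Fin m → G) (x : G),
      multiDiff m y (fun z => f (c + φ z)) x = multiDiff m (fun i => φ (y i)) f (c + φ x) := by
  intro m
  induction m with
  | zero => intro y x; rfl
  | succ m ih =>
    intro y x
    show fdiff (y 0) (multiDiff m (fun i => y i.succ) (fun z => f (c + φ z))) x = _
    show multiDiff m (fun i => y i.succ) (fun z => f (c + φ z)) (x + y 0)
        - multiDiff m (fun i => y i.succ) (fun z => f (c + φ z)) x = _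
    rw [ih, ih]
    show _ = fdiff (φ (y 0)) (multiDiff m (fun i => φ (y i.succ)) f) (c + φ x)
    show _ = multiDiff m (fun i => φ (y i.succ)) f (c + φ x + φ (y 0))
        - multiDiff m (fun i => φ (y i.succ)) f (c + φ x)
    rw [hφ, ← add_assoc]

lemma multiDiff_const {G : Type*} [Add G] (h : G) (f : G → ℂ) :
    ∀ m, multiDiff m (fun _ => h) f = (fdiff h)^[m] f := by
  intro m
  induction m with
  | zero => rfl
  | succ m ih =>
    show fdiff h (multiDiff m (fun _ => h) f) = _
    rw [ih, Function.iterate_succ_apply']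

lemma fdiff_comm {G : Type*} [AddCommGroup G] (a b : G) (f : G → ℂ) (x : G) :
    fdiff a (fdiff b f) x = fdiff b (fdiff a f) x := by
  simp only [fdiff]
  rw [add_right_comm]
  ring

lemma multiDiff_fdiff {G : Type*} [AddCommGroup G] (h : G) :
    ∀ (m : ℕ) (y : Fin m → G) (f : G → ℂ) (x : G),
      multiDiff m y (fdiff h f) x = fdiff h (multiDiff m y f) x := by
  intro m
  induction m with
  | zero => intro y f x; rfl
  | succ m ih =>
    intro y f x
    show multiDiff m (fun i => y i.succ) (fdiff h f) (x + y 0)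
        - multiDiff m (fun i => y i.succ) (fdiff h f) x = _
    rw [ih, ih]
    rw [show fdiff h (multiDiff (m+1) y f) x
        = fdiff h (fdiff (y 0) (multiDiff m (fun i => y i.succ) f)) x from rfl]
    rw [← fdiff_comm]
    rfl

lemma genpoly_fdiff {G : Type*} [AddCommGroup G] (n : ℕ) (f : G → ℂ)
    (hf : ∀ (y : Fin (n+1) → G) (x : G), multiDiff (n+1) y f x = 0) (h : G) :
    ∀ (y : Fin (n+1) → G) (x : G), multiDiff (n+1) y (fdiff h f) x = 0 := by
  intro y x
  rw [multiDiff_fdiff]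
  show multiDiff (n+1) y f (x + h) - multiDiff (n+1) y f x = 0
  rw [hf, hf, sub_zero]

lemma genpoly_iterate {G : Type*} [AddCommGroup G] (n : ℕ) (h : G) :
    ∀ (j : ℕ) (f : G → ℂ),
      (∀ (y : Fin (n+1) → G) (x : G), multiDiff (n+1) y f x = 0) →
      ∀ (y : Fin (n+1) → G) (x : G), multiDiff (n+1) y ((fdiff h)^[j] f) x = 0 := by
  intro j
  induction j with
  | zero => intro f hf; exact hf
  | succ j ih =>
    intro f hf
    rw [Function.iterate_succ_apply]
    exact ih _ (genpoly_fdiff n f hf h)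

/-- A function on `ℤ` with vanishing first difference is constant. -/
lemma eq_const_of_fdiff (φ : ℤ → ℂ) (h : ∀ x, fdiff (1:ℤ) φ x = 0) (t : ℤ) : φ t = φ 0 := by
  have h' : ∀ x : ℤ, φ (x + 1) = φ x := fun x => eq_of_sub_eq_zero (h x)
  induction t using Int.induction_on with
  | zero => rfl
  | succ k ih => rw [h']; exact ih
  | pred k ih =>
    have h2 := h' (-(k:ℤ) - 1)
    rw [sub_add_cancel] at h2
    exact h2.symm.trans ih

/-- A periodic function on `ℤ` with vanishing `(n+1)`-st difference is constant. -/
lemma const_of_periodic (k : ℕ) (hk : 0 < k) :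
    ∀ (n : ℕ) (φ : ℤ → ℂ), (∀ x, (fdiff (1:ℤ))^[n+1] φ x = 0) →
      (∀ x : ℤ, φ (x + k) = φ x) → ∀ t, φ t = φ 0 := by
  intro n
  induction n with
  | zero =>
    intro φ h _ t
    exact eq_const_of_fdiff φ (by simpa using h) t
  | succ n ih =>
    intro φ h hper t
    set ψ := fdiff (1:ℤ) φ with hψdef
    have hψ : ∀ x, (fdiff (1:ℤ))^[n+1] ψ x = 0 := fun x => by
      have := h x; rwa [Function.iterate_succ_apply] at this
    have hψper : ∀ x : ℤ, ψ (x + k) = ψ x := fun x => by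
      simp only [hψdef, fdiff]
      rw [add_right_comm, hper, hper]
    have hc := ih ψ hψ hψper
    have hstep : ∀ x : ℤ, φ (x + 1) = φ x + ψ 0 := by
      intro x
      have h1 : φ (x + 1) - φ x = ψ 0 := hc x
      exact sub_eq_iff_eq_add'.mp h1
    have hmul : ∀ (m : ℕ) (x : ℤ), φ (x + m) = φ x + m * ψ 0 := by
      intro m
      induction m with
      | zero => simp
      | succ m ihm =>
        intro x
        have hx : (x + ((m+1 : ℕ) : ℤ)) = (x + m) + 1 := by push_cast; ring
        rw [hx, hstep, ihm]; push_cast; ring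
    have hzero : (k:ℂ) * ψ 0 = 0 := by
      have h0 := hmul k 0
      rw [hper 0] at h0
      have : φ 0 = φ 0 + (k:ℂ) * ψ 0 := by simpa using h0
      exact (left_eq_add.mp this)
    have hψ0 : ψ 0 = 0 := by
      have hk' : (k:ℂ) ≠ 0 := Nat.cast_ne_zero.2 hk.ne'
      exact (mul_eq_zero.mp hzero).resolve_left hk'
    exact eq_const_of_fdiff φ (fun x => (hc x).trans hψ0) t

/-- Binomial-type polynomial `t(t-1)⋯(t-j+1)/j!` as a function on `ℂ`. -/
noncomputable def bin (j : ℕ) (t : ℂ) : ℂ :=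
  (∏ i ∈ Finset.range j, (t - (i:ℂ))) / (j.factorial : ℂ)

lemma bin_zero (t : ℂ) : bin 0 t = 1 := by simp [bin]

lemma bin_succ_zero (j : ℕ) : bin (j+1) 0 = 0 := by
  unfold bin
  rw [Finset.prod_eq_zero (Finset.mem_range.2 (Nat.succ_pos j)) (by simp)]
  simp

lemma bin_pascal (j : ℕ) (t : ℂ) : bin (j+1) (t+1) - bin (j+1) t = bin j t := by
  unfold bin
  have h1 : ∏ i ∈ range (j+1), (t + 1 - (i:ℂ)) = (t+1) * ∏ i ∈ range j, (t - (i:ℂ)) := by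
    rw [Finset.prod_range_succ']
    simp only [Nat.cast_zero, sub_zero]
    rw [mul_comm]
    congr 1
    refine Finset.prod_congr rfl fun i _ => ?_
    push_cast; ring
  have h2 : ∏ i ∈ range (j+1), (t - (i:ℂ)) = (∏ i ∈ range j, (t - (i:ℂ))) * (t - j) :=
    Finset.prod_range_succ _ _
  have hfac : (((j+1).factorial : ℕ) : ℂ) = ((j:ℂ)+1) * (j.factorial : ℂ) := by
    rw [Nat.factorial_succ]; push_cast; ring
  have hj : (j.factorial : ℂ) ≠ 0 := Nat.cast_ne_zero.2 (Nat.factorial_ne_zero j)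
  have hj1 : ((j:ℂ)+1) ≠ 0 := by
    have : (((j+1:ℕ)):ℂ) ≠ 0 := Nat.cast_ne_zero.2 (Nat.succ_ne_zero j)
    push_cast at this; exact this
  rw [h1, h2, hfac]
  field_simp
  ring

/-- Newton's forward-difference formula on `ℤ`. -/
lemma newton : ∀ (n : ℕ) (φ : ℤ → ℂ), (∀ x, (fdiff (1:ℤ))^[n+1] φ x = 0) →
    ∀ t : ℤ, φ t = ∑ j ∈ range (n+1), (fdiff (1:ℤ))^[j] φ 0 * bin j (t:ℂ) := by
  intro n
  induction n with
  | zero =>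
    intro φ h t
    have hs : ∑ j ∈ range (0+1), (fdiff (1:ℤ))^[j] φ 0 * bin j (t:ℂ) = φ 0 := by
      simp [bin_zero]
    rw [hs]
    exact eq_const_of_fdiff φ (by simpa using h) t
  | succ n ih =>
    intro φ h t
    set ψ := fdiff (1:ℤ) φ with hψdef
    have hψ : ∀ x, (fdiff (1:ℤ))^[n+1] ψ x = 0 := fun x => by
      have := h x; rwa [Function.iterate_succ_apply] at this
    have ihψ := ih ψ hψ
    set R : ℤ → ℂ := fun s => ∑ j ∈ range (n+2), (fdiff (1:ℤ))^[j] φ 0 * bin j (s:ℂ) with hR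
    have hRdiff : ∀ x : ℤ, R (x+1) - R x = ψ x := by
      intro x
      have e1 : R (x+1) - R x
          = ∑ j ∈ range (n+2), (fdiff (1:ℤ))^[j] φ 0 * (bin j ((x:ℂ)+1) - bin j (x:ℂ)) := by
        simp only [hR]
        push_cast
        rw [← Finset.sum_sub_distrib]
        exact Finset.sum_congr rfl fun j _ => (mul_sub _ _ _).symm
      rw [e1, Finset.sum_range_succ']
      simp only [bin_zero, sub_self, mul_zero, add_zero]
      have e2 : ∀ i, (fdiff (1:ℤ))^[i+1] φ 0 * (bin (i+1) ((x:ℂ)+1) - bin (i+1) (x:ℂ))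
          = (fdiff (1:ℤ))^[i] ψ 0 * bin i (x:ℂ) := fun i => by
        rw [bin_pascal, Function.iterate_succ_apply]
      rw [Finset.sum_congr rfl fun i _ => e2 i]
      exact (ihψ x).symm
    have hD : ∀ x, fdiff (1:ℤ) (fun s => φ s - R s) x = 0 := fun x => by
      show (φ (x+1) - R (x+1)) - (φ x - R x) = 0
      have h1 : φ (x+1) - φ x = ψ x := rfl
      have h2 := hRdiff x
      have : (φ (x+1) - R (x+1)) - (φ x - R x) = (φ (x+1) - φ x) - (R (x+1) - R x) := by ring
      rw [this, h1, h2, sub_self]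
    have hc := eq_const_of_fdiff _ hD t
    have hR0 : R 0 = φ 0 := by
      simp only [hR, Int.cast_zero]
      rw [Finset.sum_range_succ']
      simp [bin_succ_zero, bin_zero]
    have : φ t - R t = φ 0 - R 0 := by simpa using hc
    rw [hR0, sub_self] at this
    exact sub_eq_zero.mp (by rw [this])

/-- Torsion invariance of generalized polynomials. -/
lemma torsion_invariant {H : Type*} [AddCommGroup H] (n : ℕ) (f : H → ℂ)
    (hf : ∀ (y : Fin (n+1) → H) (x : H), multiDiff (n+1) y f x = 0)
    (x t : H) (k : ℕ) (hk : 0 < k) (ht : k • t = 0) : f (x + t) = f x := by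
  set φ : ℤ → ℂ := fun j => f (x + j • t) with hφ
  have hadd : ∀ a b : ℤ, (a + b) • t = a • t + b • t := fun a b => add_zsmul t a b
  have hdiff : ∀ j : ℤ, (fdiff (1:ℤ))^[n+1] φ j = 0 := by
    intro j
    rw [← multiDiff_const]
    have := multiDiff_comp (fun j : ℤ => j • t) hadd f x (n+1) (fun _ => (1:ℤ)) j
    simp only [one_zsmul] at this
    rw [hφ]
    rw [this]
    exact hf _ _
  have hper : ∀ j : ℤ, φ (j + k) = φ j := by
    intro j
    simp only [hφ]
    rw [add_zsmul, natCast_zsmul, ht, add_zero]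
  have key := const_of_periodic k hk n φ hdiff hper 1
  have key2 : f (x + (1:ℤ) • t) = f (x + (0:ℤ) • t) := key
  rw [one_zsmul, zero_zsmul, add_zero] at key2
  exact key2

/-- `f` on `ℤ^N` is given by a polynomial in the coordinates. -/
def IsPolyFun (N : ℕ) (f : (Fin N → ℤ) → ℂ) : Prop :=
  ∃ P : MvPolynomial (Fin N) ℂ, ∀ x, f x = MvPolynomial.eval (fun i => ((x i : ℤ) : ℂ)) P

lemma snoc_add_snoc (N : ℕ) (u v : Fin N → ℤ) (s t : ℤ) :
    (Fin.snoc u s + Fin.snoc v t : Fin (N+1) → ℤ) = Fin.snoc (u + v) (s + t) := by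
  funext i
  refine Fin.lastCases ?_ ?_ i
  · simp
  · intro j; simp

lemma snoc_add_single (N : ℕ) (u : Fin N → ℤ) (s : ℤ) :
    (Fin.snoc u s + Pi.single (Fin.last N) (1:ℤ) : Fin (N+1) → ℤ) = Fin.snoc u (s + 1) := by
  funext i
  refine Fin.lastCases ?_ ?_ i
  · simp
  · intro j
    simp [Pi.single_eq_of_ne ((Fin.castSucc_lt_last j).ne)]

lemma iterate_slice (N : ℕ) : ∀ (j : ℕ) (f : (Fin (N+1) → ℤ) → ℂ) (u : Fin N → ℤ) (t : ℤ),
    (fdiff (1:ℤ))^[j] (fun s => f (Fin.snoc u s)) t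
      = (fdiff (Pi.single (Fin.last N) (1:ℤ)))^[j] f (Fin.snoc u t) := by
  intro j
  induction j with
  | zero => intro f u t; rfl
  | succ j ih =>
    intro f u t
    rw [Function.iterate_succ_apply, Function.iterate_succ_apply]
    have key : fdiff (1:ℤ) (fun s => f (Fin.snoc u s))
        = fun s => (fdiff (Pi.single (Fin.last N) (1:ℤ)) f) (Fin.snoc u s) := by
      funext s
      show f (Fin.snoc u (s+1)) - f (Fin.snoc u s) = f (Fin.snoc u s + _) - f (Fin.snoc u s)
      rw [snoc_add_single]
    rw [key, ih]

open MvPolynomial in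
/-- Generalized polynomials on `ℤ^N` are polynomials in the coordinates. -/
lemma genpoly_pi : ∀ (N n : ℕ) (f : (Fin N → ℤ) → ℂ),
    (∀ (y : Fin (n+1) → (Fin N → ℤ)) (x : Fin N → ℤ), multiDiff (n+1) y f x = 0) →
    IsPolyFun N f := by
  intro N
  induction N with
  | zero =>
    intro n f _
    refine ⟨MvPolynomial.C (f (fun i => i.elim0)), fun x => ?_⟩
    rw [eval_C]
    congr 1
    exact Subsingleton.elim _ _
  | succ N ihN =>
    intro n f hf
    set el : Fin (N+1) → ℤ := Pi.single (Fin.last N) (1:ℤ) with hel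
    -- the slice functions
    set g : ℕ → (Fin N → ℤ) → ℂ := fun j u => (fdiff el)^[j] f (Fin.snoc u 0) with hg
    -- each slice is a generalized polynomial on ℤ^N
    have hgpoly : ∀ j, ∀ (y : Fin (n+1) → (Fin N → ℤ)) (x : Fin N → ℤ),
        multiDiff (n+1) y (g j) x = 0 := by
      intro j y x
      have hemb : ∀ a b : Fin N → ℤ,
          (Fin.snoc (a + b) (0:ℤ) : Fin (N+1) → ℤ) = Fin.snoc a 0 + Fin.snoc b 0 := by
        intro a b; rw [snoc_add_snoc, add_zero]
      have hcomp := multiDiff_comp (fun u : Fin N → ℤ => (Fin.snoc u 0 : Fin (N+1) → ℤ))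
        (fun a b => by rw [← hemb]) ((fdiff el)^[j] f) 0 (n+1) y x
      simp only [zero_add] at hcomp
      show multiDiff (n+1) y (fun z => (fdiff el)^[j] f (Fin.snoc z 0)) x = 0
      rw [hcomp]
      exact genpoly_iterate n el j f hf _ _
    -- choose polynomials for the slices
    have hQ : ∀ j : ℕ, ∃ Q : MvPolynomial (Fin N) ℂ,
        ∀ u, g j u = eval (fun i => ((u i : ℤ) : ℂ)) Q := fun j => ihN n (g j) (hgpoly j)
    choose Q hQ using hQ
    -- Newton expansion in the last variable
    have hnewton : ∀ x : Fin (N+1) → ℤ,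
        f x = ∑ j ∈ range (n+1), g j (Fin.init x) * bin j ((x (Fin.last N) : ℤ) : ℂ) := by
      intro x
      have hslice : ∀ s : ℤ, (fdiff (1:ℤ))^[n+1] (fun s => f (Fin.snoc (Fin.init x) s)) s = 0 := by
        intro s
        rw [iterate_slice, ← multiDiff_const]
        exact hf _ _
      have := newton n (fun s => f (Fin.snoc (Fin.init x) s)) hslice (x (Fin.last N))
      rw [Fin.snoc_init_self] at this
      rw [this]
      refine Finset.sum_congr rfl fun j _ => ?_
      congr 1
      rw [iterate_slice]
    -- assemble the multivariate polynomial
    refine ⟨∑ j ∈ range (n+1), (rename Fin.castSucc (Q j)) *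
      (MvPolynomial.C ((j.factorial : ℂ)⁻¹) *
        ∏ i ∈ range j, (X (Fin.last N) - MvPolynomial.C (i:ℂ))), fun x => ?_⟩
    rw [hnewton x, map_sum]
    refine Finset.sum_congr rfl fun j _ => ?_
    rw [eval_mul, eval_rename, eval_mul, eval_C, map_prod]
    have h1 : eval ((fun i => ((x i : ℤ) : ℂ)) ∘ Fin.castSucc) (Q j)
        = g j (Fin.init x) := by
      rw [hQ j (Fin.init x)]
      rfl
    have h2 : ∀ i ∈ range j,
        eval (fun i => ((x i : ℤ) : ℂ)) (X (Fin.last N) - MvPolynomial.C (i:ℂ))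
          = ((x (Fin.last N) : ℤ) : ℂ) - (i : ℂ) := by
      intro i _
      rw [map_sub, eval_X, eval_C]
    rw [h1, Finset.prod_congr rfl h2]
    unfold bin
    rw [div_eq_mul_inv]
    ring

end GenPolyAux

theorem genPolynomial_isPolynomial_of_fg {G : Type*} [AddCommGroup G]
    (hfg : AddGroup.FG G) (f : G → ℂ) (hf : IsGenPolynomial f) :
    IsPolynomialC f := by
  classical
  obtain ⟨n, hf⟩ := hf
  haveI := hfg
  obtain ⟨N, ι, fι, p, hp, e, ⟨E⟩⟩ := AddCommGroup.equiv_free_prod_directSum_zmod G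
  set k : ℕ := ∏ i : ι, p i ^ e i with hk
  have hkpos : 0 < k := Finset.prod_pos fun i _ => pow_pos (hp i).pos _
  have htors : ∀ s : DirectSum ι (fun i => ZMod (p i ^ e i)), k • s = 0 := by
    intro s
    refine DFinsupp.ext fun i => ?_
    rw [DFinsupp.smul_apply]
    obtain ⟨m, hm⟩ : (p i ^ e i) ∣ k := Finset.dvd_prod_of_mem _ (Finset.mem_univ i)
    have hz : (p i ^ e i) • s i = 0 := by
      rw [nsmul_eq_mul, ZMod.natCast_self, zero_mul]
    rw [hm, mul_comm, mul_smul, hz, smul_zero]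
    simp
  -- the embedding of ℤ^N into G
  set emb : (Fin N → ℤ) → G :=
    fun u => E.symm (Finsupp.equivFunOnFinite.symm u, 0) with hemb
  have hsymm_add : ∀ u v : Fin N → ℤ,
      Finsupp.equivFunOnFinite.symm (u + v)
        = Finsupp.equivFunOnFinite.symm u + Finsupp.equivFunOnFinite.symm v := by
    intro u v
    ext a
    simp
  have hembadd : ∀ u v, emb (u + v) = emb u + emb v := by
    intro u v
    simp only [hemb, hsymm_add]
    rw [← map_add E.symm]
    congr 1
    rw [Prod.mk_add_mk, add_zero]
  -- the restricted function on ℤ^N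
  set h : (Fin N → ℤ) → ℂ := fun u => f (emb u) with hh
  have hhpoly : ∀ (y : Fin (n+1) → (Fin N → ℤ)) (x : Fin N → ℤ),
      multiDiff (n+1) y h x = 0 := by
    intro y x
    have hcomp := GenPolyAux.multiDiff_comp emb hembadd f 0 (n+1) y x
    simp only [zero_add] at hcomp
    rw [hh]
    rw [hcomp]
    exact hf _ _
  obtain ⟨P, hP⟩ := GenPolyAux.genpoly_pi N n h hhpoly
  -- the additive coordinate functions on G
  refine ⟨N, fun i x => (((E x).1 i : ℤ) : ℂ), P, ?_, ?_⟩
  · intro i x y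
    simp only [map_add, Prod.fst_add, Finsupp.add_apply, Int.cast_add]
  · intro x
    set w : Fin N → ℤ := fun i => (E x).1 i with hw
    set t : G := E.symm (0, (E x).2) with htdef
    have hxsplit : x = emb w + t := by
      simp only [hemb, htdef, hw]
      rw [show (fun i => (E x).1 i) = ⇑((E x).1) from rfl,
        Finsupp.equivFunOnFinite_symm_coe]
      rw [← map_add]
      rw [Prod.mk_add_mk, add_zero, zero_add]
      exact (E.symm_apply_apply x).symm
    have htor : k • t = 0 := by
      rw [htdef, ← map_nsmul]
      have h1 : k • ((0 : Fin N →₀ ℤ), (E x).2)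
          = ((0 : Fin N →₀ ℤ), k • (E x).2) := by
        have := map_nsmul (AddMonoidHom.inr (Fin N →₀ ℤ) (DirectSum ι fun i => ZMod (p i ^ e i))) k (E x).2
        simp only [AddMonoidHom.inr_apply] at this
        exact this.symm
      rw [h1, htors, Prod.mk_zero_zero, map_zero]
    have step1 : f x = f (emb w) := by
      rw [hxsplit]
      exact GenPolyAux.torsion_invariant n f hf (emb w) t k hkpos htor
    rw [step1]
    exact hP w
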